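/- arXiv:2312.13588 — 3 statements merged into one kernel-verified Lean document; each statement's English description precedes it below -/
import Mathlib

section
/- Every family F of subsets of [n] satisfying the (1,1,0)-intersection pattern modulo 2 has size at most n/2 + 1, i.e., 2(|F| − 1) ≤ n. -/
open Finset

/-- A family `F` of subsets of `Fin n` satisfies the `α`-intersection pattern modulo 2
(for `α = (α_1, …, α_k)`, here 0-indexed: `α i` governs intersections of `i+1` distinct sets)
if every subfamily of `i+1` distinct sets has intersection of size `≡ α_i (mod 2)`. -/
def SatisfiesPattern (n k : ℕ) (α : Fin k → ZMod 2) (F : Finset (Finset (Fin n))) : Prop :=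
  ∀ i : Fin k, ∀ S : Finset (Finset (Fin n)), S ⊆ F → S.card = i.val + 1 →
    ((S.inf id).card : ZMod 2) = α i

/-- `maxPattern k α n` is `f_α(n)`, the maximum size of a family of subsets of `[n]`
satisfying the `α`-intersection pattern modulo 2. -/
noncomputable def maxPattern (k : ℕ) (α : Fin k → ZMod 2) (n : ℕ) : ℕ :=
  sSup {m : ℕ | ∃ F : Finset (Finset (Fin n)), SatisfiesPattern n k α F ∧ F.card = m}

section Aux

variable {n : ℕ}

/-- characteristic vector of `B` restricted to `A`. -/
private def chr (A B : Finset (Fin n)) : ↥A → ZMod 2 := fun x => if (x : Fin n) ∈ B then 1 else 0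

private lemma sum_chr (A B : Finset (Fin n)) :
    ∑ x : ↥A, chr A B x = (((A ∩ B).card : ℕ) : ZMod 2) := by
  classical
  unfold chr
  rw [univ_eq_attach]
  rw [Finset.sum_attach A (fun y => if y ∈ B then (1 : ZMod 2) else 0)]
  rw [Finset.sum_boole, filter_mem_eq_inter]

private lemma dot_chr (A B C : Finset (Fin n)) :
    ∑ x : ↥A, chr A B x * chr A C x = (((A ∩ (B ∩ C)).card : ℕ) : ZMod 2) := by
  classical
  have h : ∀ x : ↥A, chr A B x * chr A C x = chr A (B ∩ C) x := by
    intro x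
    simp only [chr, mem_inter]
    by_cases hB : (x : Fin n) ∈ B <;> by_cases hC : (x : Fin n) ∈ C <;> simp [hB, hC]
  rw [Finset.sum_congr rfl (fun x _ => h x), sum_chr]

private lemma dot_sum {ι X : Type*} [Fintype ι] [Fintype X]
    (g : ι → ZMod 2) (v : ι → X → ZMod 2) (w : X → ZMod 2) :
    ∑ x : X, (∑ i : ι, g i • v i) x * w x = ∑ i : ι, g i * ∑ x : X, v i x * w x := by
  simp only [Finset.sum_apply, Pi.smul_apply, smul_eq_mul, Finset.sum_mul, Finset.mul_sum,
    mul_assoc]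
  exact Finset.sum_comm

variable {F : Finset (Finset (Fin n))}

private lemma card1 (hF : SatisfiesPattern n 3 ![1, 1, 0] F) {B : Finset (Fin n)} (hB : B ∈ F) :
    ((B.card : ℕ) : ZMod 2) = 1 := by
  have h := hF 0 {B} (by simpa using hB) (by simp)
  simpa using h

private lemma card2 (hF : SatisfiesPattern n 3 ![1, 1, 0] F) {B C : Finset (Fin n)}
    (hB : B ∈ F) (hC : C ∈ F) (hBC : B ≠ C) : (((B ∩ C).card : ℕ) : ZMod 2) = 1 := by
  have h := hF 1 {B, C} (by simp [insert_subset_iff, hB, hC]) (by rw [card_pair hBC]; rfl)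
  simpa [inf_insert, inf_eq_inter] using h

private lemma card3 (hF : SatisfiesPattern n 3 ![1, 1, 0] F) {B C D : Finset (Fin n)}
    (hB : B ∈ F) (hC : C ∈ F) (hD : D ∈ F) (hBC : B ≠ C) (hBD : B ≠ D) (hCD : C ≠ D) :
    (((B ∩ (C ∩ D)).card : ℕ) : ZMod 2) = 0 := by
  have hcard : ({B, C, D} : Finset (Finset (Fin n))).card = 3 := by
    rw [card_insert_of_notMem (by simp [hBC, hBD]), card_pair hCD]
  have h := hF 2 {B, C, D} (by simp [insert_subset_iff, hB, hC, hD]) (by rw [hcard]; rfl)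
  simpa [inf_insert, inf_eq_inter] using h

private lemma inside (hF : SatisfiesPattern n 3 ![1, 1, 0] F) {A : Finset (Fin n)} (hA : A ∈ F) :
    F.card - 1 ≤ A.card := by
  classical
  have hmem : ∀ i : ↥(F.erase A), (i : Finset (Fin n)) ∈ F ∧ (i : Finset (Fin n)) ≠ A := by
    intro i
    have h := i.2
    rw [mem_erase] at h
    exact ⟨h.2, h.1⟩
  have hindep : LinearIndependent (ZMod 2)
      (fun i : ↥(F.erase A) => chr A (i : Finset (Fin n))) := by
    rw [Fintype.linearIndependent_iff]
    intro g hg l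
    have h0 := dot_sum g (fun i : ↥(F.erase A) => chr A (i : Finset (Fin n)))
      (chr A (l : Finset (Fin n)))
    rw [hg] at h0
    simp only [Pi.zero_apply, zero_mul, Finset.sum_const_zero] at h0
    have hdot : ∀ i : ↥(F.erase A),
        g i * ∑ x : ↥A, chr A (i : Finset (Fin n)) x * chr A (l : Finset (Fin n)) x
          = if i = l then g i else 0 := by
      intro i
      rw [dot_chr]
      by_cases hil : i = l
      · subst hil
        rw [if_pos rfl, inter_self, card2 hF hA (hmem i).1 (Ne.symm (hmem i).2), mul_one]
      · rw [if_neg hil]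
        have hne : (i : Finset (Fin n)) ≠ (l : Finset (Fin n)) := fun h => hil (Subtype.ext h)
        rw [card3 hF hA (hmem i).1 (hmem l).1 (Ne.symm (hmem i).2) (Ne.symm (hmem l).2) hne,
          mul_zero]
    rw [Finset.sum_congr rfl (fun i _ => hdot i)] at h0
    simpa using h0.symm
  have h := hindep.fintype_card_le_finrank
  rw [Module.finrank_fintype_fun_eq_card] at h
  rw [Fintype.card_coe, card_erase_of_mem hA, Fintype.card_coe] at h
  exact h

private lemma outside (hF : SatisfiesPattern n 3 ![1, 1, 0] F) {A : Finset (Fin n)} (hA : A ∈ F)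
    (hm : 3 ≤ F.card) : F.card - 1 ≤ Aᶜ.card := by
  classical
  have hmem : ∀ i : ↥(F.erase A), (i : Finset (Fin n)) ∈ F ∧ (i : Finset (Fin n)) ≠ A := by
    intro i
    have h := i.2
    rw [mem_erase] at h
    exact ⟨h.2, h.1⟩
  let w : ↥(F.erase A) → ↥(Aᶜ) → ZMod 2 := fun i => chr Aᶜ (i : Finset (Fin n))
  -- parity of a set within the complement of A
  have hcompl : ∀ D : Finset (Fin n),
      (((Aᶜ ∩ D).card : ℕ) : ZMod 2) + (((A ∩ D).card : ℕ) : ZMod 2)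
        = ((D.card : ℕ) : ZMod 2) := by
    intro D
    have h1 : (Aᶜ : Finset (Fin n)) ∩ D = D \ A := by
      ext x; simp [mem_compl, mem_sdiff, and_comm]
    have h2 : A ∩ D = D ∩ A := inter_comm A D
    have h3 : (D \ A).card + (D ∩ A).card = D.card := card_sdiff_add_card_inter D A
    rw [h1, h2, ← Nat.cast_add, h3]
  -- dot product values
  have dvv : ∀ i l : ↥(F.erase A), i ≠ l → ∑ x : ↥(Aᶜ), w i x * w l x = 1 := by
    intro i l hil
    have hne : (i : Finset (Fin n)) ≠ (l : Finset (Fin n)) := fun h => hil (Subtype.ext h)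
    show ∑ x : ↥(Aᶜ), chr Aᶜ _ x * chr Aᶜ _ x = 1
    rw [dot_chr]
    have h := hcompl ((i : Finset (Fin n)) ∩ (l : Finset (Fin n)))
    rw [card3 hF hA (hmem i).1 (hmem l).1 (Ne.symm (hmem i).2) (Ne.symm (hmem l).2) hne] at h
    rw [card2 hF (hmem i).1 (hmem l).1 hne] at h
    linear_combination h
  have dvv' : ∀ i : ↥(F.erase A), ∑ x : ↥(Aᶜ), w i x * w i x = 0 := by
    intro i
    show ∑ x : ↥(Aᶜ), chr Aᶜ _ x * chr Aᶜ _ x = 0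
    rw [dot_chr, inter_self]
    have h := hcompl (i : Finset (Fin n))
    rw [card2 hF hA (hmem i).1 (Ne.symm (hmem i).2)] at h
    rw [card1 hF (hmem i).1] at h
    linear_combination h
  have dtv : ∀ l : ↥(F.erase A), ∑ x : ↥(Aᶜ), w l x = 0 := by
    intro l
    show ∑ x : ↥(Aᶜ), chr Aᶜ _ x = 0
    rw [sum_chr]
    have h := hcompl (l : Finset (Fin n))
    rw [card2 hF hA (hmem l).1 (Ne.symm (hmem l).2)] at h
    rw [card1 hF (hmem l).1] at h
    linear_combination h
  have hcardι : Fintype.card ↥(F.erase A) = F.card - 1 := by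
    rw [Fintype.card_coe, card_erase_of_mem hA]
  have hι0 : Nonempty ↥(F.erase A) := Fintype.card_pos_iff.mp (by omega)
  obtain ⟨i0⟩ := hι0
  obtain ⟨i1, hi1⟩ : ∃ i1 : ↥(F.erase A), i1 ≠ i0 :=
    Fintype.exists_ne_of_one_lt_card (by omega) i0
  have hXne : Nonempty ↥(Aᶜ) := by
    by_contra hX
    have hE : IsEmpty ↥(Aᶜ) := not_nonempty_iff.mp hX
    have h := dvv i1 i0 hi1
    rw [Finset.univ_eq_empty, Finset.sum_empty] at h
    exact absurd h (by decide)
  let u : ↥(F.erase A) → ↥(Aᶜ) → ZMod 2 :=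
    fun i => if i = i0 then (fun _ => 1) else w i + w i0
  have hu0 : u i0 = fun _ => (1 : ZMod 2) := by simp only [u, if_pos rfl]
  have hune : ∀ i, i ≠ i0 → u i = w i + w i0 := by
    intro i hi; simp only [u, if_neg hi]
  have hindep : LinearIndependent (ZMod 2) u := by
    rw [Fintype.linearIndependent_iff]
    intro g hg
    have hgl : ∀ l : ↥(F.erase A), l ≠ i0 → g l = 0 := by
      intro l hl
      have h0 := dot_sum g u (w l)
      rw [hg] at h0
      simp only [Pi.zero_apply, zero_mul, Finset.sum_const_zero] at h0
      have hdot : ∀ i : ↥(F.erase A),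
          g i * ∑ x : ↥(Aᶜ), u i x * w l x = if i = l then g i else 0 := by
        intro i
        by_cases hii : i = i0
        · subst hii
          rw [hu0]
          have h1 : ∑ x : ↥(Aᶜ), (1 : ZMod 2) * w l x = 0 := by
            simpa using dtv l
          rw [h1, mul_zero, if_neg (Ne.symm hl)]
        · rw [hune i hii]
          have hsplit : ∑ x : ↥(Aᶜ), (w i + w i0) x * w l x
              = (∑ x : ↥(Aᶜ), w i x * w l x) + ∑ x : ↥(Aᶜ), w i0 x * w l x := by
            simp only [Pi.add_apply, add_mul]
            rw [Finset.sum_add_distrib]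
          rw [hsplit]
          by_cases hil : i = l
          · subst hil
            rw [dvv' i, dvv i0 i (Ne.symm hii), zero_add, mul_one, if_pos rfl]
          · rw [dvv i l hil, dvv i0 l (Ne.symm hl), if_neg hil]
            have h2 : (1 + 1 : ZMod 2) = 0 := by decide
            rw [h2, mul_zero]
      rw [Finset.sum_congr rfl (fun i _ => hdot i)] at h0
      simpa using h0.symm
    have hg0 : g i0 = 0 := by
      obtain ⟨x0⟩ := hXne
      have hx := congrFun hg x0
      simp only [Finset.sum_apply, Pi.smul_apply, smul_eq_mul, Pi.zero_apply] at hx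
      rw [Finset.sum_eq_single i0 (fun b _ hb => by rw [hgl b hb, zero_mul])
        (fun h => absurd (Finset.mem_univ i0) h)] at hx
      rw [hu0] at hx
      simpa using hx
    intro l
    by_cases hl : l = i0
    · rw [hl]; exact hg0
    · exact hgl l hl
  have h := hindep.fintype_card_le_finrank
  rw [Module.finrank_fintype_fun_eq_card] at h
  simp only [Fintype.card_coe] at h
  rw [card_erase_of_mem hA] at h
  exact h

end Aux

theorem bound_110 (n : ℕ) (F : Finset (Finset (Fin n)))
    (hF : SatisfiesPattern n 3 ![1, 1, 0] F) :
    2 * (F.card - 1) ≤ n := by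
  classical
  rcases Nat.lt_or_ge F.card 2 with h1 | h1
  · omega
  rcases Nat.lt_or_ge F.card 3 with h2 | h3
  · -- F.card = 2
    have hc2 : F.card = 2 := by omega
    obtain ⟨B, C, hBC, hFeq⟩ := Finset.card_eq_two.mp hc2
    have hB : B ∈ F := by rw [hFeq]; simp
    have hC : C ∈ F := by rw [hFeq]; simp
    have hint := card2 hF hB hC hBC
    have hne : (B ∩ C).Nonempty := by
      rcases (B ∩ C).eq_empty_or_nonempty with he | hne
      · rw [he] at hint; simp at hint
      · exact hne
    obtain ⟨a, ha⟩ := hne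
    rw [mem_inter] at ha
    by_contra hn
    have hn1 : n ≤ 1 := by omega
    have hsub : Subsingleton (Fin n) := by
      rw [← Fintype.card_le_one_iff_subsingleton, Fintype.card_fin]
      exact hn1
    apply hBC
    ext x
    have hx : x = a := Subsingleton.elim x a
    subst hx
    simp [ha.1, ha.2]
  · -- F.card ≥ 3
    have hFne : F.Nonempty := Finset.card_pos.mp (by omega)
    obtain ⟨A, hA⟩ := hFne
    have hin := inside hF hA
    have hout := outside hF hA h3
    have hcc : Aᶜ.card = n - A.card := by
      rw [Finset.card_compl, Fintype.card_fin]
    have hle : A.card ≤ n := by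
      have h := Finset.card_le_univ A
      rwa [Fintype.card_fin] at h
    omega
end

section
/- Every family F of subsets of [n] satisfying the (0,1,0,0)-intersection pattern modulo 2 satisfies |F|·(|F| − 1)/2 ≤ n; consequently f_{(0,1,0,0)}(n) ≤ √(2n) + 1. Moreover, as n → ∞, f_{(0,1,0,0)}(n) ~ √(2n). -/
open Finset

/-! ### Auxiliary linear algebra over `ZMod 2` -/

noncomputable def ind {n : ℕ} (S : Finset (Fin n)) : Fin n → ZMod 2 :=
  fun x => if x ∈ S then 1 else 0

lemma dot_ind {n : ℕ} (S T : Finset (Fin n)) :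
    ∑ x, ind S x * ind T x = ((S ∩ T).card : ZMod 2) := by
  have h : ∀ x, ind S x * ind T x = if x ∈ S ∩ T then (1 : ZMod 2) else 0 := by
    intro x
    simp only [ind, Finset.mem_inter, ite_and]
    by_cases hS : x ∈ S <;> by_cases hT : x ∈ T <;> simp [hS, hT]
  have h2 : Finset.filter (fun x => x ∈ S ∩ T) Finset.univ = S ∩ T := by
    ext x; simp
  simp only [h, Finset.sum_boole, h2]

lemma li_of_orth {n : ℕ} {ι : Type*} [Fintype ι] (v : ι → (Fin n → ZMod 2))
    (hd : ∀ i, ∑ x, v i x * v i x = 1)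
    (ho : ∀ i j, i ≠ j → ∑ x, v i x * v j x = 0) :
    LinearIndependent (ZMod 2) v := by
  rw [Fintype.linearIndependent_iff]
  intro g hg i
  have h := congrArg (fun w : Fin n → ZMod 2 => ∑ x, w x * v i x) hg
  simp only [Finset.sum_apply, Pi.zero_apply, zero_mul, Finset.sum_const_zero,
    smul_eq_mul, Pi.smul_apply, Finset.sum_mul] at h
  rw [Finset.sum_comm] at h
  have h2 : ∀ j : ι, ∑ x, g j * v j x * v i x = g j * ∑ x, v j x * v i x := by
    intro j; rw [Finset.mul_sum]; exact Finset.sum_congr rfl fun x _ => mul_assoc _ _ _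
  simp only [h2] at h
  rw [Finset.sum_eq_single i] at h
  · rwa [hd i, mul_one] at h
  · intro j _ hj; rw [ho j i hj, mul_zero]
  · simp

/-! ### The upper bound -/

lemma key {n : ℕ} {F : Finset (Finset (Fin n))} (hF : SatisfiesPattern n 4 ![0,1,0,0] F)
    {P Q : Finset (Finset (Fin n))} (hP : P ∈ F.powersetCard 2) (hQ : Q ∈ F.powersetCard 2) :
    ((P.inf id ∩ Q.inf id).card : ZMod 2) = if P = Q then 1 else 0 := by
  rw [Finset.mem_powersetCard] at hP hQ
  have hU : P.inf id ∩ Q.inf id = (P ∪ Q).inf id := by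
    rw [Finset.inf_union]; rfl
  rw [hU]
  by_cases hPQ : P = Q
  · subst hPQ
    rw [if_pos rfl, Finset.union_self]
    have := hF 1 P hP.1 (by simpa using hP.2)
    simpa using this
  · rw [if_neg hPQ]
    have hsub : P ∪ Q ⊆ F := Finset.union_subset hP.1 hQ.1
    have hc1 : (P ∪ Q).card ≤ 4 := le_trans (Finset.card_union_le _ _) (by omega)
    have hc2 : 3 ≤ (P ∪ Q).card := by
      by_contra hcon
      push_neg at hcon
      have h1 : P = P ∪ Q := Finset.eq_of_subset_of_card_le Finset.subset_union_left (by omega)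
      have h2 : Q = P ∪ Q := Finset.eq_of_subset_of_card_le Finset.subset_union_right (by omega)
      exact hPQ (h1.trans h2.symm)
    rcases (by omega : (P ∪ Q).card = 3 ∨ (P ∪ Q).card = 4) with hc | hc
    · have := hF ⟨2, by omega⟩ (P ∪ Q) hsub (by simpa using hc)
      simpa using this
    · have := hF ⟨3, by omega⟩ (P ∪ Q) hsub (by simpa using hc)
      simpa using this

lemma bound1 {n : ℕ} {F : Finset (Finset (Fin n))} (hF : SatisfiesPattern n 4 ![0,1,0,0] F) :
    F.card.choose 2 ≤ n := by
  classical
  set v : {P // P ∈ F.powersetCard 2} → (Fin n → ZMod 2) :=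
    fun P => ind (P.val.inf id) with hv
  have li : LinearIndependent (ZMod 2) v := by
    apply li_of_orth
    · intro P
      rw [hv, dot_ind, key hF P.2 P.2, if_pos rfl]
    · intro P Q hne
      rw [hv, dot_ind, key hF P.2 Q.2, if_neg (fun h => hne (Subtype.ext h))]
  have hcard := li.fintype_card_le_finrank
  rw [Module.finrank_pi] at hcard
  rwa [Fintype.card_coe, Finset.card_powersetCard, Fintype.card_fin] at hcard

/-! ### The construction -/

lemma count_one {m : ℕ} (a : Fin m) :
    ((powersetCard 2 (univ : Finset (Fin m))).filter (fun P => a ∈ P)).card = m - 1 := by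
  classical
  have himg : (powersetCard 2 (univ : Finset (Fin m))).filter (fun P => a ∈ P)
      = (univ.erase a).image (fun b => ({a, b} : Finset (Fin m))) := by
    ext P
    simp only [mem_filter, mem_powersetCard_univ, mem_image, mem_erase, mem_univ, and_true]
    constructor
    · rintro ⟨hc, ha⟩
      obtain ⟨x, y, hxy, rfl⟩ := card_eq_two.mp hc
      rcases (by simpa using ha : a = x ∨ a = y) with rfl | rfl
      · exact ⟨y, Ne.symm hxy, rfl⟩
      · exact ⟨x, hxy, by rw [pair_comm]⟩
    · rintro ⟨b, hb, rfl⟩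
      exact ⟨card_pair (Ne.symm hb), mem_insert_self _ _⟩
  rw [himg, card_image_of_injOn, card_erase_of_mem (mem_univ a), card_univ, Fintype.card_fin]
  intro b hb c hc h
  simp only [coe_erase, Set.mem_diff, Set.mem_singleton_iff] at hb hc
  have h' : ({a, b} : Finset (Fin m)) = {a, c} := h
  have : b ∈ ({a, c} : Finset (Fin m)) := h' ▸ mem_insert_of_mem (mem_singleton_self b)
  simp only [mem_insert, mem_singleton] at this
  tauto

lemma cnt1 {m : ℕ} {T : Finset (Fin m)} (hT : T.card = 1) :
    ((powersetCard 2 (univ : Finset (Fin m))).filter (fun P => T ⊆ P)).card = m - 1 := by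
  obtain ⟨a, rfl⟩ := card_eq_one.mp hT
  simp only [singleton_subset_iff]
  exact count_one a

lemma cnt2 {m : ℕ} {T : Finset (Fin m)} (hT : T.card = 2) :
    ((powersetCard 2 (univ : Finset (Fin m))).filter (fun P => T ⊆ P)).card = 1 := by
  have h : (powersetCard 2 (univ : Finset (Fin m))).filter (fun P => T ⊆ P) = {T} := by
    ext P
    simp only [mem_filter, mem_powersetCard_univ, mem_singleton]
    constructor
    · rintro ⟨hP, hTP⟩
      exact (eq_of_subset_of_card_le hTP (by omega)).symm
    · rintro rfl
      exact ⟨hT, subset_rfl⟩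
  rw [h, card_singleton]

lemma cnt3 {m : ℕ} {T : Finset (Fin m)} (hT : 3 ≤ T.card) :
    ((powersetCard 2 (univ : Finset (Fin m))).filter (fun P => T ⊆ P)).card = 0 := by
  rw [Finset.card_eq_zero, Finset.filter_eq_empty_iff]
  intro P hP hTP
  rw [mem_powersetCard_univ] at hP
  have := Finset.card_le_card hTP
  omega

lemma cardAf {α : Type*} (s : Finset α) (p : α → Prop) [DecidablePred p] :
    (s.attach.filter (fun x => p x.val)).card = (s.filter p).card := by
  rw [Finset.filter_attach, Finset.card_map, Finset.card_attach]

lemma inf_Fi {m n : ℕ} (e : {P // P ∈ powersetCard 2 (univ : Finset (Fin m))} ↪ Fin n)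
    {T : Finset (Fin m)} (hT : T.Nonempty) :
    T.inf (fun i => ((powersetCard 2 (univ : Finset (Fin m))).attach.filter
        (fun P => i ∈ P.val)).map e)
      = ((powersetCard 2 (univ : Finset (Fin m))).attach.filter (fun P => T ⊆ P.val)).map e := by
  classical
  induction hT using Finset.Nonempty.cons_induction with
  | singleton a => simp [singleton_subset_iff]
  | cons a s h hs ih =>
    rw [Finset.inf_cons, ih]
    have : ∀ (A B : Finset (Fin n)), A ⊓ B = A ∩ B := fun A B => rfl
    rw [this, ← Finset.map_inter, ← Finset.filter_and]
    congr 1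
    apply Finset.filter_congr
    intro P _
    simp [Finset.insert_subset_iff]

lemma construction {n m : ℕ} (hm : Odd m) (hmn : m.choose 2 ≤ n) :
    ∃ F : Finset (Finset (Fin n)), SatisfiesPattern n 4 ![0,1,0,0] F ∧ F.card = m := by
  classical
  obtain ⟨e⟩ : Nonempty ({P // P ∈ powersetCard 2 (univ : Finset (Fin m))} ↪ Fin n) := by
    apply Function.Embedding.nonempty_of_card_le
    rw [Fintype.card_coe, card_powersetCard, card_univ, Fintype.card_fin, Fintype.card_fin]
    exact hmn
  set Fi : Fin m → Finset (Fin n) := fun i =>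
    ((powersetCard 2 (univ : Finset (Fin m))).attach.filter (fun P => i ∈ P.val)).map e with hFi
  have hinfcard : ∀ T : Finset (Fin m), T.Nonempty → (T.inf Fi).card
      = ((powersetCard 2 (univ : Finset (Fin m))).filter (fun P => T ⊆ P)).card := by
    intro T hT
    rw [hFi, inf_Fi e hT, Finset.card_map, cardAf]
  have hFicard : ∀ i, (Fi i).card = m - 1 := by
    intro i
    have h1 : ({i} : Finset (Fin m)).inf Fi = Fi i := Finset.inf_singleton
    have := hinfcard {i} (singleton_nonempty i)
    rw [h1] at this
    rw [this, cnt1 (card_singleton i)]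
  have hinj : Function.Injective Fi := by
    intro i j hij
    by_contra hne
    have h2 : ({i, j} : Finset (Fin m)).inf Fi = Fi i := by
      rw [Finset.inf_insert, Finset.inf_singleton, hij, inf_idem]
    have hc := hinfcard {i, j} (insert_nonempty _ _)
    rw [h2, hFicard, cnt2 (card_pair hne)] at hc
    obtain ⟨k, hk⟩ := hm
    have : i.val < m := i.2
    omega
  refine ⟨univ.map ⟨Fi, hinj⟩, ?_, by simp⟩
  intro i S hS hcard
  obtain ⟨T, hTu, rfl⟩ := Finset.subset_map_iff.mp hS
  rw [Finset.card_map] at hcard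
  have hTne : T.Nonempty := Finset.card_pos.mp (by omega)
  have hid : (Finset.map ⟨Fi, hinj⟩ T).inf id = T.inf Fi := by
    rw [Finset.inf_map]; rfl
  rw [hid, hinfcard T hTne]
  obtain ⟨iv, hiv⟩ := i
  have hcard' : T.card = iv + 1 := hcard
  clear hcard
  interval_cases iv
  · rw [cnt1 (by omega : T.card = 1)]
    obtain ⟨k, hk⟩ := hm
    have hm1 : m - 1 = 2 * k := by omega
    rw [hm1, Nat.cast_mul]
    have h2 : ((2 : ℕ) : ZMod 2) = 0 := by decide
    rw [h2, zero_mul]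
    rfl
  · rw [cnt2 (by omega : T.card = 2)]; rfl
  · rw [cnt3 (by omega : 3 ≤ T.card)]; rfl
  · rw [cnt3 (by omega : 3 ≤ T.card)]; rfl

/-! ### Properties of `maxPattern` -/

lemma patternSet_nonempty (n : ℕ) :
    {m : ℕ | ∃ F : Finset (Finset (Fin n)), SatisfiesPattern n 4 ![0,1,0,0] F ∧ F.card = m}.Nonempty := by
  refine ⟨0, ∅, ?_, rfl⟩
  intro i S hS hcard
  have : S = ∅ := Finset.subset_empty.mp hS
  subst this
  simp at hcard

lemma patternSet_bdd (n : ℕ) :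
    BddAbove {m : ℕ | ∃ F : Finset (Finset (Fin n)), SatisfiesPattern n 4 ![0,1,0,0] F ∧ F.card = m} := by
  refine ⟨n + 2, ?_⟩
  rintro m ⟨F, hF, rfl⟩
  have h := bound1 hF
  rw [Nat.choose_two_right] at h
  by_contra hcon
  push_neg at hcon
  have h2 : 2 * (F.card - 1) ≤ F.card * (F.card - 1) := by
    apply Nat.mul_le_mul_right
    omega
  omega

lemma maxPattern_choose_le (n : ℕ) : (maxPattern 4 ![0,1,0,0] n).choose 2 ≤ n := by
  have hmem := Nat.sSup_mem (patternSet_nonempty n) (patternSet_bdd n)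
  obtain ⟨F, hF, hFc⟩ := hmem
  rw [maxPattern, ← hFc]
  exact bound1 hF

lemma le_maxPattern {n m : ℕ} (hm : Odd m) (hmn : m.choose 2 ≤ n) :
    m ≤ maxPattern 4 ![0,1,0,0] n := by
  obtain ⟨F, hF, hFc⟩ := construction hm hmn
  exact le_csSup (patternSet_bdd n) ⟨F, hF, hFc⟩

lemma upper_real (n : ℕ) :
    (maxPattern 4 ![0,1,0,0] n : ℝ) ≤ Real.sqrt (2 * n) + 1 := by
  set M := maxPattern 4 ![0,1,0,0] n with hM
  have hc := maxPattern_choose_le n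
  rw [Nat.choose_two_right] at hc
  rcases Nat.eq_zero_or_pos M with h0 | h1
  · rw [h0]
    have := Real.sqrt_nonneg (2 * (n:ℝ))
    push_cast
    linarith
  · have he : Even (M * (M - 1)) := by
      have h := Nat.even_mul_succ_self (M - 1)
      rwa [Nat.sub_add_cancel h1, mul_comm] at h
    obtain ⟨c, hcc⟩ := he
    rw [hcc] at hc
    have h2 : M * (M - 1) ≤ 2 * n := by omega
    have h3 : (M - 1) * (M - 1) ≤ 2 * n :=
      le_trans (Nat.mul_le_mul_right _ (Nat.sub_le _ _)) h2
    have h4 : ((M : ℝ) - 1) ^ 2 ≤ 2 * n := by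
      have : (((M - 1 : ℕ) : ℝ)) ^ 2 ≤ ((2 * n : ℕ) : ℝ) := by
        rw [sq]
        exact_mod_cast h3
      rw [Nat.cast_sub h1] at this
      push_cast at this ⊢
      linarith
    have hM1 : (1 : ℝ) ≤ (M : ℝ) := by exact_mod_cast h1
    have h5 : (M : ℝ) - 1 ≤ Real.sqrt (2 * n) := by
      rw [Real.le_sqrt (by linarith) (by positivity)]
      exact h4
    linarith

lemma lower_real {n : ℕ} (hn : 1 ≤ n) :
    Real.sqrt (2 * n) - 2 ≤ (maxPattern 4 ![0,1,0,0] n : ℝ) := by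
  set t := Nat.sqrt (2 * n) with ht
  have ht1 : 1 ≤ t := Nat.le_sqrt.mpr (by omega)
  set m := if Even t then t - 1 else t with hm
  have hmodd : Odd m := by
    rw [Nat.odd_iff]
    rcases Nat.even_or_odd t with he | ho
    · rw [hm, if_pos he]
      rw [Nat.even_iff] at he
      omega
    · rw [hm, if_neg (by rwa [Nat.not_even_iff_odd])]
      rwa [Nat.odd_iff] at ho
  have hmt : m ≤ t := by rw [hm]; split <;> omega
  have hmn : m.choose 2 ≤ n := by
    rw [Nat.choose_two_right]
    have h1 : m * (m - 1) ≤ t * t :=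
      Nat.mul_le_mul hmt (le_trans (Nat.sub_le _ _) hmt)
    have h2 : t * t ≤ 2 * n := by
      have := Nat.sqrt_le' (2 * n)
      rwa [sq] at this
    omega
  have hle := le_maxPattern hmodd hmn
  have hsq : Real.sqrt (2 * n) < t + 1 := by
    rw [Real.sqrt_lt' (by positivity)]
    have := Nat.lt_succ_sqrt' (2 * n)
    exact_mod_cast this
  have hmt1 : t - 1 ≤ m := by rw [hm]; split <;> omega
  have hcast : ((t : ℝ) - 1) ≤ (m : ℝ) := by
    have h : ((t - 1 : ℕ) : ℝ) ≤ (m : ℝ) := by exact_mod_cast hmt1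
    rwa [Nat.cast_sub ht1, Nat.cast_one] at h
  have : (m : ℝ) ≤ (maxPattern 4 ![0,1,0,0] n : ℝ) := by exact_mod_cast hle
  linarith

lemma sqrt2n_atTop : Filter.Tendsto (fun n : ℕ => Real.sqrt (2 * n)) Filter.atTop Filter.atTop := by
  rw [Filter.tendsto_atTop]
  intro b
  filter_upwards [Filter.eventually_ge_atTop (Nat.ceil (b ^ 2))] with n hn
  rcases le_or_gt b 0 with hb | hb
  · exact le_trans hb (Real.sqrt_nonneg _)
  · have h1 : b ^ 2 ≤ (n : ℝ) := le_trans (Nat.le_ceil _) (by exact_mod_cast hn)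
    have h2 : b ^ 2 ≤ 2 * (n : ℝ) := by
      have : (0:ℝ) ≤ (n:ℝ) := by positivity
      linarith
    calc b = Real.sqrt (b ^ 2) := by rw [Real.sqrt_sq hb.le]
    _ ≤ Real.sqrt (2 * n) := Real.sqrt_le_sqrt h2

theorem f_0100 :
    (∀ (n : ℕ) (F : Finset (Finset (Fin n))), SatisfiesPattern n 4 ![0, 1, 0, 0] F →
      F.card * (F.card - 1) / 2 ≤ n) ∧
    (∀ n : ℕ, (maxPattern 4 ![0, 1, 0, 0] n : ℝ) ≤ Real.sqrt (2 * n) + 1) ∧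
    Filter.Tendsto (fun n : ℕ => (maxPattern 4 ![0, 1, 0, 0] n : ℝ) / Real.sqrt (2 * n))
      Filter.atTop (nhds 1) := by
  refine ⟨?_, upper_real, ?_⟩
  · intro n F hF
    have := bound1 hF
    rwa [Nat.choose_two_right] at this
  · have h0 : Filter.Tendsto (fun n : ℕ => 2 / Real.sqrt (2 * n)) Filter.atTop (nhds 0) :=
      Filter.Tendsto.div_atTop tendsto_const_nhds sqrt2n_atTop
    have h0' : Filter.Tendsto (fun n : ℕ => 1 / Real.sqrt (2 * n)) Filter.atTop (nhds 0) :=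
      Filter.Tendsto.div_atTop tendsto_const_nhds sqrt2n_atTop
    have hg : Filter.Tendsto (fun n : ℕ => 1 - 2 / Real.sqrt (2 * n)) Filter.atTop (nhds 1) := by
      have := (tendsto_const_nhds : Filter.Tendsto (fun _ : ℕ => (1:ℝ)) Filter.atTop (nhds 1)).sub h0
      simpa using this
    have hh : Filter.Tendsto (fun n : ℕ => 1 + 1 / Real.sqrt (2 * n)) Filter.atTop (nhds 1) := by
      have := (tendsto_const_nhds : Filter.Tendsto (fun _ : ℕ => (1:ℝ)) Filter.atTop (nhds 1)).add h0'
      simpa using this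
    apply tendsto_of_tendsto_of_tendsto_of_le_of_le' hg hh
    · filter_upwards [Filter.eventually_ge_atTop 1] with n hn
      have hpos : 0 < Real.sqrt (2 * n) := by
        apply Real.sqrt_pos.mpr
        have : (1:ℝ) ≤ (n:ℝ) := by exact_mod_cast hn
        linarith
      have hlow := lower_real hn
      calc 1 - 2 / Real.sqrt (2 * n)
          = (Real.sqrt (2 * n) - 2) / Real.sqrt (2 * n) := by
            rw [sub_div, div_self hpos.ne']
        _ ≤ (maxPattern 4 ![0, 1, 0, 0] n : ℝ) / Real.sqrt (2 * n) := by
            gcongr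
    · filter_upwards [Filter.eventually_ge_atTop 1] with n hn
      have hpos : 0 < Real.sqrt (2 * n) := by
        apply Real.sqrt_pos.mpr
        have : (1:ℝ) ≤ (n:ℝ) := by exact_mod_cast hn
        linarith
      have hup := upper_real n
      calc (maxPattern 4 ![0, 1, 0, 0] n : ℝ) / Real.sqrt (2 * n)
          ≤ (Real.sqrt (2 * n) + 1) / Real.sqrt (2 * n) := by
            gcongr
        _ = 1 + 1 / Real.sqrt (2 * n) := by
            rw [add_div, div_self hpos.ne']
end

section
/- For every n ≥ 2, the maximum size of a family of subsets of [n] satisfying the (1,0,1,0)-intersection pattern modulo 2 equals n when n is even and equals n − 1 when n is odd; that is, f_{(1,0,1,0)}(n) = n for even n and f_{(1,0,1,0)}(n) = n − 1 for odd n ≥ 3. Moreover, as n → ∞, f_{(0,0,1,1)}(n) ~ √(2n). -/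
open Finset

namespace IPHelper

variable {n : ℕ}

def ind (s : Finset (Fin n)) (x : Fin n) : ZMod 2 := if x ∈ s then 1 else 0

lemma ind_mul (s t : Finset (Fin n)) (x : Fin n) : ind s x * ind t x = ind (s ∩ t) x := by
  simp only [ind, Finset.mem_inter]
  by_cases hs : x ∈ s <;> by_cases ht : x ∈ t <;> simp [hs, ht]

lemma sum_ind (s : Finset (Fin n)) : ∑ x : Fin n, ind s x = (s.card : ZMod 2) := by
  have : (Finset.univ.filter (fun x => x ∈ s)).card = s.card := by congr 1; ext x; simp
  simp [ind, Finset.sum_boole, this]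

lemma sum_ind_over (s t : Finset (Fin n)) : ∑ x ∈ s, ind t x = ((s ∩ t).card : ZMod 2) := by
  simp [ind, Finset.sum_boole, Finset.filter_mem_eq_inter]

lemma cast_odd {m : ℕ} (h : Odd m) : ((m : ZMod 2)) = 1 := by
  rw [← ZMod.natCast_mod m 2, Nat.odd_iff.mp h, Nat.cast_one]

lemma cast_even {m : ℕ} (h : Even m) : ((m : ZMod 2)) = 0 := by
  rw [← ZMod.natCast_mod m 2, Nat.even_iff.mp h, Nat.cast_zero]

variable {α : Fin 4 → ZMod 2} {F : Finset (Finset (Fin n))}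

lemma pat1 (hF : SatisfiesPattern n 4 α F) {A : Finset (Fin n)} (hA : A ∈ F) :
    ((A.card : ZMod 2)) = α 0 := by
  have := hF 0 {A} (by simpa) (by simp)
  simpa using this

lemma pat2 (hF : SatisfiesPattern n 4 α F) {A B : Finset (Fin n)} (hA : A ∈ F) (hB : B ∈ F)
    (hAB : A ≠ B) : (((A ∩ B).card : ZMod 2)) = α 1 := by
  have := hF 1 {A, B} (by simp [Finset.insert_subset_iff, hA, hB])
    (by rw [Finset.card_insert_of_notMem (by simpa using hAB), Finset.card_singleton]; rfl)
  simpa [Finset.inf_insert] using this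

lemma pat3 (hF : SatisfiesPattern n 4 α F) {A B C : Finset (Fin n)} (hA : A ∈ F) (hB : B ∈ F)
    (hC : C ∈ F) (hAB : A ≠ B) (hAC : A ≠ C) (hBC : B ≠ C) :
    (((A ∩ (B ∩ C)).card : ZMod 2)) = α 2 := by
  have := hF 2 {A, B, C} (by simp [Finset.insert_subset_iff, hA, hB, hC])
    (by rw [Finset.card_insert_of_notMem (by simp [hAB, hAC]),
      Finset.card_insert_of_notMem (by simpa using hBC), Finset.card_singleton]; rfl)
  simpa [Finset.inf_insert] using this

lemma card_quad {γ : Type*} [DecidableEq γ] {a b c d : γ} (hab : a ≠ b) (hcd : c ≠ d)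
    (h1 : ¬(a = c ∧ b = d)) (h2 : ¬(a = d ∧ b = c)) :
    3 ≤ ({a, b, c, d} : Finset γ).card ∧ ({a, b, c, d} : Finset γ).card ≤ 4 := by
  constructor
  · by_contra hlt
    push_neg at hlt
    have hsub1 : ({a, b} : Finset γ) ⊆ {a, b, c, d} := by intro x; simp; tauto
    have hsub2 : ({c, d} : Finset γ) ⊆ {a, b, c, d} := by intro x; simp; tauto
    have hc1 : ({a, b} : Finset γ).card = 2 := Finset.card_pair hab
    have hc2 : ({c, d} : Finset γ).card = 2 := Finset.card_pair hcd
    have e1 : ({a, b} : Finset γ) = {a, b, c, d} :=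
      Finset.eq_of_subset_of_card_le hsub1 (by omega)
    have e2 : ({c, d} : Finset γ) = {a, b, c, d} :=
      Finset.eq_of_subset_of_card_le hsub2 (by omega)
    have e3 : ({a, b} : Finset γ) = {c, d} := e1.trans e2.symm
    have ha : a = c ∨ a = d := by
      have : a ∈ ({c, d} : Finset γ) := by rw [← e3]; simp
      simpa using this
    have hb : b = c ∨ b = d := by
      have : b ∈ ({c, d} : Finset γ) := by rw [← e3]; simp
      simpa using this
    rcases ha with rfl | rfl <;> rcases hb with rfl | rfl <;> tauto
  · have t1 := Finset.card_insert_le a ({b, c, d} : Finset γ)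
    have t2 := Finset.card_insert_le b ({c, d} : Finset γ)
    have t3 := Finset.card_insert_le c ({d} : Finset γ)
    have t4 : ({d} : Finset γ).card = 1 := Finset.card_singleton d
    omega

lemma pat34 (hF : SatisfiesPattern n 4 ![0,0,1,1] F) {S : Finset (Finset (Fin n))}
    (hS : S ⊆ F) (h3 : 3 ≤ S.card) (h4 : S.card ≤ 4) :
    ((S.inf id).card : ZMod 2) = 1 := by
  rcases (by omega : S.card = 3 ∨ S.card = 4) with h | h
  · have := hF 2 S hS (by rw [h]; rfl); rw [this]; rfl
  · have := hF 3 S hS (by rw [h]; rfl); rw [this]; rfl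


lemma matrix_rank_add_le {m m' K : Type*} [Fintype m] [Fintype m'] [Field K]
    (A B : Matrix m m' K) : (A + B).rank ≤ A.rank + B.rank := by
  rw [Matrix.rank, Matrix.rank, Matrix.rank, Matrix.mulVecLin_add]
  have h : LinearMap.range (A.mulVecLin + B.mulVecLin) ≤
      LinearMap.range A.mulVecLin ⊔ LinearMap.range B.mulVecLin := by
    rintro x ⟨v, rfl⟩
    exact Submodule.mem_sup.2 ⟨_, ⟨v, rfl⟩, _, ⟨v, rfl⟩, rfl⟩
  exact le_trans (Submodule.finrank_mono h)
    (Submodule.finrank_add_le_finrank_add_finrank _ _)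

lemma matrix_rank_ones_le {ι K : Type*} [Fintype ι] [Field K] :
    (Matrix.of fun (_ : ι) (_ : ι) => (1 : K)).rank ≤ 1 := by
  have : (Matrix.of fun (_ : ι) (_ : ι) => (1 : K)) =
      (Matrix.of fun (_ : ι) (_ : Fin 1) => (1 : K)) *
      (Matrix.of fun (_ : Fin 1) (_ : ι) => (1 : K)) := by
    ext i j; simp [Matrix.mul_apply]
  rw [this]
  exact le_trans (Matrix.rank_mul_le_left _ _)
    (le_trans (Matrix.rank_le_card_width _) (by simp))

lemma card_le_of_mul_transpose_one {m n : ℕ} (M : Matrix (Fin m) (Fin n) (ZMod 2))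
    (h : M * M.transpose = 1) : m ≤ n := by
  haveI : Fact (Nat.Prime 2) := ⟨Nat.prime_two⟩
  calc m = (1 : Matrix (Fin m) (Fin m) (ZMod 2)).rank := by simp
  _ = (M * M.transpose).rank := by rw [h]
  _ ≤ M.rank := Matrix.rank_mul_le_left _ _
  _ ≤ n := M.rank_le_width

lemma card_le_of_gram {ι : Type*} [Fintype ι] [DecidableEq ι] {n : ℕ}
    (M : Matrix ι (Fin n) (ZMod 2))
    (h : ∀ p q, (M * M.transpose) p q = if p = q then 0 else 1) :
    Fintype.card ι ≤ n + 1 := by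
  haveI : Fact (Nat.Prime 2) := ⟨Nat.prime_two⟩
  have h1 : (1 : Matrix ι ι (ZMod 2)) =
      M * M.transpose + (Matrix.of fun (_ : ι) (_ : ι) => (1 : ZMod 2)) := by
    ext p q
    have e2 : (0 : ZMod 2) = 1 + 1 := rfl
    by_cases hpq : p = q <;> simp [h, hpq, Matrix.one_apply, ← e2]
  calc Fintype.card ι = (1 : Matrix ι ι (ZMod 2)).rank := by simp
  _ = (M * M.transpose + (Matrix.of fun (_ : ι) (_ : ι) => (1 : ZMod 2))).rank := by rw [← h1]
  _ ≤ (M * M.transpose).rank + (Matrix.of fun (_ : ι) (_ : ι) => (1 : ZMod 2)).rank :=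
      matrix_rank_add_le _ _
  _ ≤ M.rank + 1 := add_le_add (Matrix.rank_mul_le_left _ _) matrix_rank_ones_le
  _ ≤ n + 1 := by
      exact Nat.add_le_add_right (le_trans (Matrix.rank_le_card_width _) (by simp)) 1


lemma gram_entry {ι : Type*} [Fintype ι] (f : ι → Finset (Fin n)) (p q : ι) :
    ((Matrix.of fun r x => ind (f r) x) * (Matrix.of fun r x => ind (f r) x).transpose) p q
      = (((f p) ∩ (f q)).card : ZMod 2) := by
  simp only [Matrix.mul_apply, Matrix.transpose_apply, Matrix.of_apply]
  rw [← sum_ind]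
  exact Finset.sum_congr rfl fun x _ => ind_mul _ _ x

lemma gram1010 (hF : SatisfiesPattern n 4 ![1,0,1,0] F) :
    (Matrix.of fun (i : Fin F.card) x => ind ((F.equivFin.symm i : Finset (Fin n))) x) *
    (Matrix.of fun (i : Fin F.card) x => ind ((F.equivFin.symm i : Finset (Fin n))) x).transpose
      = 1 := by
  classical
  set e := F.equivFin.symm with he
  ext i j
  rw [gram_entry (fun i => (e i : Finset (Fin n))) i j, Matrix.one_apply]
  by_cases hij : i = j
  · subst hij
    rw [if_pos rfl, Finset.inter_self]
    exact (pat1 hF (e i).2).trans rfl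
  · rw [if_neg hij]
    have hne : (e i : Finset (Fin n)) ≠ (e j : Finset (Fin n)) :=
      fun h => hij (e.injective (Subtype.ext h))
    exact (pat2 hF (e i).2 (e j).2 hne).trans rfl

lemma U1 (hF : SatisfiesPattern n 4 ![1,0,1,0] F) : F.card ≤ n :=
  card_le_of_mul_transpose_one _ (gram1010 hF)

lemma U2 (hn : Odd n) (hn3 : 3 ≤ n) (hF : SatisfiesPattern n 4 ![1,0,1,0] F) :
    F.card ≠ n := by
  classical
  intro hc
  let e := F.equivFin.symm
  have hMMt : (Matrix.of fun (i : Fin F.card) x => ind ((e i : Finset (Fin n))) x) *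
      (Matrix.of fun (i : Fin F.card) x => ind ((e i : Finset (Fin n))) x).transpose = 1 :=
    gram1010 hF
  have h2 : (Matrix.of fun (i : Fin F.card) x => ind ((e i : Finset (Fin n))) x).transpose *
      (Matrix.of fun (i : Fin F.card) x => ind ((e i : Finset (Fin n))) x) = 1 :=
    (Matrix.mul_eq_one_comm_of_equiv (finCongr hc)).mp hMMt
  have hcol : ∀ x : Fin n, ∑ i : Fin F.card, ind ((e i : Finset (Fin n))) x = 1 := by
    intro x
    have hx := congr_fun (congr_fun h2 x) x
    simp only [Matrix.mul_apply, Matrix.transpose_apply, Matrix.of_apply,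
      Matrix.one_apply_eq] at hx
    rw [← hx]
    refine Finset.sum_congr rfl fun i _ => ?_
    rw [ind_mul, Finset.inter_self]
  obtain ⟨A, hA, B, hB, hAB⟩ := Finset.one_lt_card.mp (by omega : 1 < F.card)
  have way1 : ∑ i : Fin F.card, (((A ∩ B) ∩ (e i : Finset (Fin n))).card : ZMod 2) = 0 := by
    have h1 : ∀ i : Fin F.card, (((A ∩ B) ∩ (e i : Finset (Fin n))).card : ZMod 2)
        = ∑ x ∈ A ∩ B, ind ((e i : Finset (Fin n))) x := fun i => (sum_ind_over _ _).symm
    rw [Finset.sum_congr rfl (fun i _ => h1 i), Finset.sum_comm]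
    rw [Finset.sum_congr rfl (fun x _ => hcol x), Finset.sum_const, nsmul_eq_mul, mul_one]
    exact (pat2 hF hA hB hAB).trans rfl
  have way2 : ∑ i : Fin F.card, (((A ∩ B) ∩ (e i : Finset (Fin n))).card : ZMod 2) = 1 := by
    have hABi : e.symm ⟨A, hA⟩ ≠ e.symm ⟨B, hB⟩ := by
      intro h
      have := congrArg e h
      rw [Equiv.apply_symm_apply, Equiv.apply_symm_apply] at this
      exact hAB (congrArg Subtype.val this)
    rw [← Finset.sum_sdiff
      (Finset.subset_univ ({e.symm ⟨A, hA⟩, e.symm ⟨B, hB⟩} : Finset (Fin F.card)))]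
    have hpair : ∑ i ∈ ({e.symm ⟨A, hA⟩, e.symm ⟨B, hB⟩} : Finset (Fin F.card)),
        (((A ∩ B) ∩ (e i : Finset (Fin n))).card : ZMod 2) = 0 := by
      rw [Finset.sum_pair hABi]
      have hiA : (e (e.symm ⟨A, hA⟩) : Finset (Fin n)) = A := by
        rw [Equiv.apply_symm_apply]
      have hiB : (e (e.symm ⟨B, hB⟩) : Finset (Fin n)) = B := by
        rw [Equiv.apply_symm_apply]
      rw [hiA, hiB]
      have e1 : (A ∩ B) ∩ A = A ∩ B := Finset.inter_eq_left.mpr Finset.inter_subset_left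
      have e2 : (A ∩ B) ∩ B = A ∩ B := Finset.inter_eq_left.mpr Finset.inter_subset_right
      rw [e1, e2, (pat2 hF hA hB hAB).trans rfl]
      rfl
    have hterm : ∀ i ∈ (Finset.univ \ ({e.symm ⟨A, hA⟩, e.symm ⟨B, hB⟩} :
        Finset (Fin F.card))),
        (((A ∩ B) ∩ (e i : Finset (Fin n))).card : ZMod 2) = 1 := by
      intro i hi
      simp only [Finset.mem_sdiff, Finset.mem_univ, Finset.mem_insert, Finset.mem_singleton,
        true_and, not_or] at hi
      have hneA : A ≠ (e i : Finset (Fin n)) := by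
        intro h
        have h2' : e.symm ⟨A, hA⟩ = e.symm (e i) := congrArg e.symm (Subtype.ext h)
        rw [Equiv.symm_apply_apply] at h2'
        exact hi.1 h2'.symm
      have hneB : B ≠ (e i : Finset (Fin n)) := by
        intro h
        have h2' : e.symm ⟨B, hB⟩ = e.symm (e i) := congrArg e.symm (Subtype.ext h)
        rw [Equiv.symm_apply_apply] at h2'
        exact hi.2 h2'.symm
      rw [Finset.inter_assoc]
      exact (pat3 hF hA hB (e i).2 hAB hneA hneB).trans rfl
    have hrest : ∑ i ∈ (Finset.univ \ ({e.symm ⟨A, hA⟩, e.symm ⟨B, hB⟩} :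
        Finset (Fin F.card))),
        (((A ∩ B) ∩ (e i : Finset (Fin n))).card : ZMod 2) = 1 := by
      rw [Finset.sum_congr rfl hterm, Finset.sum_const, nsmul_eq_mul, mul_one]
      have hcard2 : (Finset.univ \ ({e.symm ⟨A, hA⟩, e.symm ⟨B, hB⟩} :
          Finset (Fin F.card))).card = n - 2 := by
        rw [Finset.card_sdiff_of_subset (Finset.subset_univ _), Finset.card_pair hABi,
          Finset.card_univ, Fintype.card_fin, hc]
      rw [hcard2]
      exact cast_odd (Nat.Odd.sub_even (by omega) hn (by decide))
    rw [hpair, hrest, add_zero]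
  rw [way1] at way2
  exact zero_ne_one way2

lemma sigma_eq {m : ℕ} (p q : Σ k : Fin m, Fin k.val) (h1 : p.1.val = q.1.val)
    (h2 : p.2.val = q.2.val) : p = q := by
  rcases p with ⟨⟨P, hP⟩, ⟨u, hu⟩⟩
  rcases q with ⟨⟨Q, hQ⟩, ⟨v, hv⟩⟩
  simp only at h1 h2
  subst h1
  subst h2
  rfl

lemma U3 (hF : SatisfiesPattern n 4 ![0,0,1,1] F) : Nat.choose F.card 2 ≤ n + 1 := by
  classical
  let e := F.equivFin.symm
  have einj : ∀ i j : Fin F.card, (e i : Finset (Fin n)) = (e j : Finset (Fin n)) → i = j :=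
    fun i j h => e.injective (Subtype.ext h)
  let lo : (Σ k : Fin F.card, Fin k.val) → Finset (Fin n) :=
    fun p => (e ⟨p.2.val, lt_trans p.2.isLt p.1.isLt⟩ : Finset (Fin n))
  let hi : (Σ k : Fin F.card, Fin k.val) → Finset (Fin n) :=
    fun p => (e p.1 : Finset (Fin n))
  have hlomem : ∀ p, lo p ∈ F := fun p => (e _).2
  have hhimem : ∀ p, hi p ∈ F := fun p => (e _).2
  have hlohi : ∀ p, lo p ≠ hi p := by
    intro p h
    have := congrArg Fin.val (einj _ _ h)
    simp only at this
    exact absurd this (Nat.ne_of_lt p.2.isLt)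
  have hcard : Fintype.card (Σ k : Fin F.card, Fin k.val) = Nat.choose F.card 2 := by
    rw [Fintype.card_sigma]
    simp only [Fintype.card_fin]
    rw [Fin.sum_univ_eq_sum_range (fun i => i) F.card, Finset.sum_range_id,
      Nat.choose_two_right]
  rw [← hcard]
  apply card_le_of_gram (Matrix.of fun p x => ind (lo p ∩ hi p) x)
  intro p q
  rw [gram_entry (fun p => lo p ∩ hi p) p q]
  by_cases hpq : p = q
  · subst hpq
    rw [if_pos rfl, Finset.inter_self]
    exact (pat2 hF (hlomem p) (hhimem p) (hlohi p)).trans rfl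
  · rw [if_neg hpq]
    have hvallo : ∀ r : Σ k : Fin F.card, Fin k.val, ∀ s : Σ k : Fin F.card, Fin k.val,
        lo r = lo s → r.2.val = s.2.val := by
      intro r s h
      have := congrArg Fin.val (einj _ _ h)
      simpa using this
    have hvalhi : ∀ r s : Σ k : Fin F.card, Fin k.val,
        hi r = hi s → r.1.val = s.1.val := by
      intro r s h
      exact congrArg Fin.val (einj _ _ h)
    have hvalx : ∀ r s : Σ k : Fin F.card, Fin k.val,
        lo r = hi s → r.2.val = s.1.val := by
      intro r s h
      have := congrArg Fin.val (einj _ _ h)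
      simpa using this
    have hvaly : ∀ r s : Σ k : Fin F.card, Fin k.val,
        hi r = lo s → r.1.val = s.2.val := by
      intro r s h
      have := congrArg Fin.val (einj _ _ h)
      simpa using this
    have h1 : ¬(lo p = lo q ∧ hi p = hi q) := by
      rintro ⟨ha, hb⟩
      exact hpq (sigma_eq p q (hvalhi _ _ hb) (hvallo _ _ ha))
    have h2 : ¬(lo p = hi q ∧ hi p = lo q) := by
      rintro ⟨ha, hb⟩
      have e1 := hvalx _ _ ha
      have e2 := hvaly _ _ hb
      have l1 := p.2.isLt
      have l2 := q.2.isLt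
      omega
    obtain ⟨h3, h4⟩ := card_quad (hlohi p) (hlohi q) h1 h2
    have hsub : ({lo p, hi p, lo q, hi q} : Finset (Finset (Fin n))) ⊆ F := by
      intro S hS
      simp only [Finset.mem_insert, Finset.mem_singleton] at hS
      rcases hS with rfl | rfl | rfl | rfl
      · exact hlomem p
      · exact hhimem p
      · exact hlomem q
      · exact hhimem q
    have hkey := pat34 hF hsub h3 h4
    have hinf : ({lo p, hi p, lo q, hi q} : Finset (Finset (Fin n))).inf id
        = (lo p ∩ hi p) ∩ (lo q ∩ hi q) := by
      simp only [Finset.inf_insert, Finset.inf_singleton, id]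
      rw [Finset.inter_assoc]
      rfl
    rw [hinf] at hkey
    exact hkey

lemma inf_compl {γ : Type*} {I : Finset γ} (hI : I.Nonempty) (g : γ → Finset (Fin n)) :
    I.inf (fun i => (g i)ᶜ) = (I.sup g)ᶜ := by
  induction hI using Finset.Nonempty.cons_induction with
  | singleton a => simp
  | cons a s ha hs ih =>
      rw [Finset.inf_cons, Finset.sup_cons, ih, compl_sup]

lemma sup_insert_const {I : Finset (Fin n)} (hI : I.Nonempty) (W : Finset (Fin n)) :
    I.sup (fun i => insert i W) = I ∪ W := by
  induction hI using Finset.Nonempty.cons_induction with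
  | singleton a => rw [Finset.sup_singleton, Finset.insert_eq]
  | cons a s ha hs ih =>
      rw [Finset.sup_cons, ih]
      ext x
      simp
      tauto

lemma construct1010 (W : Finset (Fin n)) (hpar : Even (n - W.card)) :
    ∃ F : Finset (Finset (Fin n)), SatisfiesPattern n 4 ![1,0,1,0] F ∧ F.card = n - W.card := by
  classical
  have hWcard : W.card ≤ n := le_trans (Finset.card_le_univ W) (by simp)
  set f : Fin n → Finset (Fin n) := fun i => (insert i W)ᶜ with hf
  have hinj : Set.InjOn f ((Finset.univ \ W : Finset (Fin n)) : Set (Fin n)) := by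
    intro i hi j hj h
    simp only [Finset.coe_sdiff, Finset.coe_univ, Set.mem_diff, Finset.mem_coe] at hi hj
    have h2 : insert i W = insert j W := by
      have := congrArg compl h
      simpa [hf] using this
    have : i ∈ insert j W := h2 ▸ Finset.mem_insert_self i W
    rcases Finset.mem_insert.mp this with h3 | h3
    · exact h3
    · exact absurd h3 hi.2
  refine ⟨(Finset.univ \ W).image f, ?_, ?_⟩
  · intro i S hS hcard
    obtain ⟨I, hIsub, hIimg⟩ := Finset.subset_image_iff.mp hS
    have hIcard : I.card = i.val + 1 := by
      rw [← hcard, ← hIimg]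
      exact (Finset.card_image_of_injOn (hinj.mono (by exact_mod_cast hIsub))).symm
    have hIne : I.Nonempty := Finset.card_pos.mp (by omega)
    have hdisj : Disjoint I W := Finset.disjoint_left.mpr
      (fun x hx => (Finset.mem_sdiff.mp (hIsub hx)).2)
    have hinf : S.inf id = (I ∪ W)ᶜ := by
      rw [← hIimg, Finset.inf_image]
      have : (id ∘ f) = f := rfl
      rw [this, hf]
      rw [inf_compl hIne (fun i => insert i W), sup_insert_const hIne]
    have hcardinf : (S.inf id).card = (n - W.card) - (i.val + 1) := by
      rw [hinf, Finset.card_compl, Finset.card_union_of_disjoint hdisj, hIcard,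
        Fintype.card_fin]
      omega
    rw [hcardinf]
    have hle : i.val + 1 ≤ n - W.card := by
      have h1 := Finset.card_le_card hS
      have h2 : ((Finset.univ \ W).image f).card ≤ (Finset.univ \ W).card :=
        Finset.card_image_le
      have h3 : (Finset.univ \ W).card = n - W.card := by
        rw [Finset.card_sdiff_of_subset (Finset.subset_univ W), Finset.card_univ, Fintype.card_fin]
      omega
    fin_cases i
    · exact (cast_odd (Nat.Even.sub_odd (by omega) hpar (by decide))).trans rfl
    · exact (cast_even ((Nat.even_sub (by omega)).mpr (by simp [hpar, Nat.even_iff] <;> decide))).trans rfl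
    · exact (cast_odd (Nat.Even.sub_odd (by omega) hpar (by decide))).trans rfl
    · exact (cast_even ((Nat.even_sub (by omega)).mpr (by simp [hpar, Nat.even_iff] <;> decide))).trans rfl
  · rw [Finset.card_image_of_injOn hinj, Finset.card_sdiff_of_subset (Finset.subset_univ W),
      Finset.card_univ, Fintype.card_fin]

lemma inf_map {β : Type*} [Fintype β] [DecidableEq β] {T : Finset (Finset β)} (hT : T.Nonempty)
    (g : β ↪ Fin n) : T.inf (Finset.map g) = Finset.map g (T.inf id) := by
  induction hT using Finset.Nonempty.cons_induction with
  | singleton a => simp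
  | cons a s ha hs ih => rw [Finset.inf_cons, Finset.inf_cons, ih, id]
                         exact (Finset.map_inter _ _).symm

lemma transfer {β : Type*} [Fintype β] [DecidableEq β] (hn : Fintype.card β ≤ n)
    (G : Finset (Finset β)) (α : Fin 4 → ZMod 2)
    (hG : ∀ i : Fin 4, ∀ S : Finset (Finset β), S ⊆ G → S.card = i.val + 1 →
      ((S.inf id).card : ZMod 2) = α i) :
    ∃ F : Finset (Finset (Fin n)), SatisfiesPattern n 4 α F ∧ F.card = G.card := by
  classical
  obtain ⟨g⟩ : Nonempty (β ↪ Fin n) := Function.Embedding.nonempty_of_card_le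
    (by simpa using hn)
  refine ⟨G.image (Finset.map g), ?_, ?_⟩
  · intro i S hS hcard
    obtain ⟨T, hTsub, hTimg⟩ := Finset.subset_image_iff.mp hS
    have hTcard : T.card = i.val + 1 := by
      rw [← hcard, ← hTimg]
      exact (Finset.card_image_of_injective T (Finset.map_injective g)).symm
    have hTne : T.Nonempty := Finset.card_pos.mp (by omega)
    have hinf : S.inf id = Finset.map g (T.inf id) := by
      rw [← hTimg, Finset.inf_image]
      have : (id ∘ Finset.map g) = Finset.map g := rfl
      rw [this, inf_map hTne]
    rw [hinf, Finset.card_map]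
    exact hG i T hTsub hTcard
  · exact Finset.card_image_of_injective G (Finset.map_injective g)

lemma inf_filter {β γ : Type*} [Fintype β] [DecidableEq β] [DecidableEq γ]
    (P : γ → β → Prop) [∀ i, DecidablePred (P i)] {I : Finset γ} (hI : I.Nonempty) :
    I.inf (fun i => Finset.univ.filter (P i))
      = Finset.univ.filter (fun x => ∀ i ∈ I, P i x) := by
  induction hI using Finset.Nonempty.cons_induction with
  | singleton a => simp
  | cons a s ha hs ih =>
      rw [Finset.inf_cons, ih]
      ext x
      simp [Finset.mem_inf]

lemma choose_two_even_odd (a : ℕ) :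
    ((Nat.choose (4*a+5) 2 : ℕ) : ZMod 2) = 0 ∧
    ((Nat.choose (4*a+4) 2 : ℕ) : ZMod 2) = 0 ∧
    ((Nat.choose (4*a+3) 2 : ℕ) : ZMod 2) = 1 ∧
    ((Nat.choose (4*a+2) 2 : ℕ) : ZMod 2) = 1 := by
  have h1 : Nat.choose (4*a+5) 2 = (4*a+5) * (2*a+2) := by
    rw [Nat.choose_two_right]
    have : (4*a+5) * (4*a+5-1) = ((4*a+5) * (2*a+2)) * 2 := by
      rw [show 4*a+5-1 = 4*a+4 by omega]; ring
    rw [this, Nat.mul_div_cancel _ (by norm_num)]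
  have h2 : Nat.choose (4*a+4) 2 = (2*a+2) * (4*a+3) := by
    rw [Nat.choose_two_right]
    have : (4*a+4) * (4*a+4-1) = ((2*a+2) * (4*a+3)) * 2 := by
      rw [show 4*a+4-1 = 4*a+3 by omega]; ring
    rw [this, Nat.mul_div_cancel _ (by norm_num)]
  have h3 : Nat.choose (4*a+3) 2 = (4*a+3) * (2*a+1) := by
    rw [Nat.choose_two_right]
    have : (4*a+3) * (4*a+3-1) = ((4*a+3) * (2*a+1)) * 2 := by
      rw [show 4*a+3-1 = 4*a+2 by omega]; ring
    rw [this, Nat.mul_div_cancel _ (by norm_num)]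
  have h4 : Nat.choose (4*a+2) 2 = (2*a+1) * (4*a+1) := by
    rw [Nat.choose_two_right]
    have : (4*a+2) * (4*a+2-1) = ((2*a+1) * (4*a+1)) * 2 := by
      rw [show 4*a+2-1 = 4*a+1 by omega]; ring
    rw [this, Nat.mul_div_cancel _ (by norm_num)]
  refine ⟨?_, ?_, ?_, ?_⟩
  · rw [h1]; exact cast_even (by rw [Nat.even_mul]; right; exact ⟨a+1, by ring⟩)
  · rw [h2]; exact cast_even (by rw [Nat.even_mul]; left; exact ⟨a+1, by ring⟩)
  · rw [h3]; exact cast_odd (by rw [Nat.odd_mul]; exact ⟨⟨2*a+1, by ring⟩, ⟨a, by ring⟩⟩)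
  · rw [h4]; exact cast_odd (by rw [Nat.odd_mul]; exact ⟨⟨a, by ring⟩, ⟨2*a, by ring⟩⟩)

lemma construct0011 (a : ℕ) (hn : Nat.choose (4*a+6) 2 ≤ n) :
    ∃ F : Finset (Finset (Fin n)), SatisfiesPattern n 4 ![0,0,1,1] F ∧ F.card = 4*a+6 := by
  classical
  set m := 4*a+6 with hm
  set t : Finset (Finset (Fin m)) := Finset.powersetCard 2 Finset.univ with ht
  have hcardt : Fintype.card {x // x ∈ t} = Nat.choose m 2 := by
    rw [Fintype.card_coe, ht, Finset.card_powersetCard, Finset.card_univ, Fintype.card_fin]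
  set A : Fin m → Finset {x // x ∈ t} :=
    fun i => Finset.univ.filter (fun s => i ∉ s.val) with hA
  have hAinj : Function.Injective A := by
    intro i j hij
    by_contra hne
    have hcard2 : ({i, j} : Finset (Fin m)).card ≤ 2 := by
      refine le_trans (Finset.card_insert_le _ _) ?_
      rw [Finset.card_singleton]
    obtain ⟨x, hx⟩ : (Finset.univ \ ({i, j} : Finset (Fin m))).Nonempty := by
      rw [← Finset.card_pos, Finset.card_sdiff_of_subset (Finset.subset_univ _), Finset.card_univ,
        Fintype.card_fin]
      omega
    rw [Finset.mem_sdiff] at hx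
    have hxi : x ≠ i := fun h => hx.2 (by simp [h])
    have hxj : x ≠ j := fun h => hx.2 (by simp [h])
    have hjx : j ≠ x := hxj.symm
    have hs0card : ({j, x} : Finset (Fin m)).card = 2 := Finset.card_pair hjx
    have hs0 : ({j, x} : Finset (Fin m)) ∈ t := by
      rw [ht, Finset.mem_powersetCard]
      exact ⟨Finset.subset_univ _, hs0card⟩
    have hmem_i : (⟨{j, x}, hs0⟩ : {x // x ∈ t}) ∈ A i := by
      rw [hA]
      simp only [Finset.mem_filter, Finset.mem_univ, true_and, Finset.mem_insert,
        Finset.mem_singleton]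
      push_neg
      exact ⟨hne, fun h => hxi h.symm⟩
    rw [hij, hA] at hmem_i
    simp at hmem_i
  have hGcard : (Finset.univ.image A).card = m := by
    rw [Finset.card_image_of_injective _ hAinj, Finset.card_univ, Fintype.card_fin]
  have hG : ∀ i : Fin 4, ∀ S : Finset (Finset {x // x ∈ t}), S ⊆ Finset.univ.image A →
      S.card = i.val + 1 → ((S.inf id).card : ZMod 2) = (![0,0,1,1] : Fin 4 → ZMod 2) i := by
    intro i S hS hcard
    obtain ⟨I, hIsub, hIimg⟩ := Finset.subset_image_iff.mp hS
    have hIcard : I.card = i.val + 1 := by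
      rw [← hcard, ← hIimg]
      exact (Finset.card_image_of_injective I hAinj).symm
    have hIne : I.Nonempty := Finset.card_pos.mp (by omega)
    have hinf : S.inf id
        = Finset.univ.filter (fun x : {x // x ∈ t} => ∀ i' ∈ I, i' ∉ x.val) := by
      rw [← hIimg, Finset.inf_image]
      have hcomp : (id ∘ A) = A := rfl
      rw [hcomp, hA]
      have h := inf_filter (fun i' (s : {x // x ∈ t}) => i' ∉ s.val) hIne
      convert h using 2
    have hcardfilter : (Finset.univ.filter
        (fun x : {x // x ∈ t} => ∀ i' ∈ I, i' ∉ x.val)).card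
        = Nat.choose (m - (i.val+1)) 2 := by
      have hbij : (Finset.univ.filter (fun x : {x // x ∈ t} => ∀ i' ∈ I, i' ∉ x.val)).card
          = (Finset.powersetCard 2 (Finset.univ \ I)).card := by
        apply Finset.card_bij (fun s _ => s.val)
        · intro s hs
          simp only [Finset.mem_filter, Finset.mem_univ, true_and] at hs
          have hst : s.val ∈ Finset.powersetCard 2 (Finset.univ : Finset (Fin m)) := s.2
          rw [Finset.mem_powersetCard] at hst
          rw [Finset.mem_powersetCard]
          refine ⟨?_, hst.2⟩
          intro x hxs
          rw [Finset.mem_sdiff]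
          exact ⟨Finset.mem_univ x, fun hxI => hs x hxI hxs⟩
        · intro s1 h1 s2 h2 h
          exact Subtype.ext h
        · intro b hb
          rw [Finset.mem_powersetCard] at hb
          have hbt : b ∈ t := by
            show b ∈ Finset.powersetCard 2 (Finset.univ : Finset (Fin m))
            rw [Finset.mem_powersetCard]
            exact ⟨Finset.subset_univ b, hb.2⟩
          refine ⟨⟨b, hbt⟩, ?_, rfl⟩
          simp only [Finset.mem_filter, Finset.mem_univ, true_and]
          intro i' hi' hmem
          have hbi := hb.1 hmem
          rw [Finset.mem_sdiff] at hbi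
          exact hbi.2 hi'
      rw [hbij, Finset.card_powersetCard, Finset.card_sdiff_of_subset (Finset.subset_univ I),
        Finset.card_univ, Fintype.card_fin, hIcard]
    rw [hinf, hcardfilter]
    obtain ⟨c1, c2, c3, c4⟩ := choose_two_even_odd a
    fin_cases i
    · rw [show m - (0+1) = 4*a+5 by omega]
      exact c1.trans rfl
    · rw [show m - (1+1) = 4*a+4 by omega]
      exact c2.trans rfl
    · rw [show m - (2+1) = 4*a+3 by omega]
      exact c3.trans rfl
    · rw [show m - (3+1) = 4*a+2 by omega]
      exact c4.trans rfl
  obtain ⟨F, hF, hFcard⟩ := transfer (n := n) (by rw [hcardt]; exact hn) (Finset.univ.image A)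
    ![0,0,1,1] hG
  exact ⟨F, hF, by rw [hFcard, hGcard]⟩

lemma empty_sat (n k : ℕ) (α : Fin k → ZMod 2) : SatisfiesPattern n k α ∅ := by
  intro i S hS hcard
  rw [Finset.subset_empty.mp hS] at hcard
  simp at hcard

lemma patSet_bdd (n k : ℕ) (α : Fin k → ZMod 2) :
    BddAbove {m : ℕ | ∃ F : Finset (Finset (Fin n)), SatisfiesPattern n k α F ∧ F.card = m} :=
  ⟨Fintype.card (Finset (Fin n)), by rintro m ⟨F, _, rfl⟩; exact F.card_le_univ⟩

lemma patSet_nonempty (n k : ℕ) (α : Fin k → ZMod 2) :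
    Set.Nonempty {m : ℕ | ∃ F : Finset (Finset (Fin n)), SatisfiesPattern n k α F ∧ F.card = m} :=
  ⟨0, ∅, empty_sat n k α, Finset.card_empty⟩

lemma le_maxPattern {k : ℕ} {α : Fin k → ZMod 2} {F : Finset (Finset (Fin n))}
    (h : SatisfiesPattern n k α F) : F.card ≤ maxPattern k α n :=
  le_csSup (patSet_bdd n k α) ⟨F, h, rfl⟩

lemma maxPattern_le {k : ℕ} {α : Fin k → ZMod 2} {b : ℕ}
    (h : ∀ F : Finset (Finset (Fin n)), SatisfiesPattern n k α F → F.card ≤ b) :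
    maxPattern k α n ≤ b := by
  apply csSup_le (patSet_nonempty n k α)
  rintro m ⟨F, hF, rfl⟩
  exact h F hF

lemma maxPattern_achieved (k : ℕ) (α : Fin k → ZMod 2) :
    ∃ F : Finset (Finset (Fin n)), SatisfiesPattern n k α F ∧ F.card = maxPattern k α n :=
  Nat.sSup_mem (patSet_nonempty n k α) (patSet_bdd n k α)

lemma even_mul_pred (m : ℕ) : Even (m * (m - 1)) := by
  rcases Nat.even_or_odd m with h | h
  · exact h.mul_right _
  · exact Even.mul_left (Nat.Odd.sub_odd h odd_one) _

lemma part1 (hn2 : 2 ≤ n) (hne : Even n) : maxPattern 4 ![1, 0, 1, 0] n = n := by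
  apply le_antisymm
  · exact maxPattern_le (fun F hF => U1 hF)
  · obtain ⟨F, hF, hc⟩ := construct1010 (n := n) ∅ (by simpa using hne)
    have := le_maxPattern hF
    rw [hc] at this
    simpa using this

lemma part2 (hn3 : 3 ≤ n) (hno : Odd n) : maxPattern 4 ![1, 0, 1, 0] n = n - 1 := by
  apply le_antisymm
  · apply maxPattern_le
    intro F hF
    have h1 := U1 hF
    have h2 := U2 hno hn3 hF
    omega
  · obtain ⟨F, hF, hc⟩ := construct1010 (n := n) {(⟨0, by omega⟩ : Fin n)}
      (by rw [Finset.card_singleton]; exact Nat.Odd.sub_odd hno odd_one)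
    have := le_maxPattern hF
    rw [hc, Finset.card_singleton] at this
    exact this

lemma ub0011 (n : ℕ) :
    maxPattern 4 ![0, 0, 1, 1] n * (maxPattern 4 ![0, 0, 1, 1] n - 1) ≤ 2 * n + 2 := by
  obtain ⟨F, hF, hc⟩ := maxPattern_achieved (n := n) 4 ![0, 0, 1, 1]
  have h3 := U3 hF
  rw [hc, Nat.choose_two_right] at h3
  obtain ⟨c, hcc⟩ := (even_mul_pred (maxPattern 4 ![0, 0, 1, 1] n)).two_dvd
  rw [hcc] at h3 ⊢
  omega

lemma lb0011 (a n : ℕ) (h : Nat.choose (4*a+6) 2 ≤ n) :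
    4*a+6 ≤ maxPattern 4 ![0, 0, 1, 1] n := by
  obtain ⟨F, hF, hc⟩ := construct0011 a h
  have := le_maxPattern hF
  omega

lemma sqrt_two_n_atTop :
    Filter.Tendsto (fun n : ℕ => Real.sqrt (2 * n)) Filter.atTop Filter.atTop := by
  apply Filter.tendsto_atTop.mpr
  intro b
  filter_upwards [Filter.eventually_ge_atTop (Nat.ceil (b ^ 2))] with n hn
  rcases le_or_gt b 0 with hb | hb
  · exact le_trans hb (Real.sqrt_nonneg _)
  · rw [Real.le_sqrt' hb]
    have h1 : (b ^ 2 : ℝ) ≤ (Nat.ceil (b ^ 2) : ℝ) := Nat.le_ceil _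
    have h2 : ((Nat.ceil (b ^ 2) : ℕ) : ℝ) ≤ (n : ℝ) := Nat.cast_le.mpr hn
    have h3 : (0 : ℝ) ≤ (n : ℝ) := Nat.cast_nonneg n
    linarith

lemma part3 :
    Filter.Tendsto (fun n : ℕ => (maxPattern 4 ![0, 0, 1, 1] n : ℝ) / Real.sqrt (2 * n))
      Filter.atTop (nhds 1) := by
  have hub : ∀ n : ℕ, (maxPattern 4 ![0, 0, 1, 1] n : ℝ) ≤ Real.sqrt (2 * n) + 3 := by
    intro n
    set m := maxPattern 4 ![0, 0, 1, 1] n with hm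
    have h := ub0011 n
    have h2 : (m - 1) * (m - 1) ≤ 2 * n + 2 :=
      le_trans (Nat.mul_le_mul_right _ (Nat.sub_le _ _)) h
    have h3 : ((m - 1 : ℕ) : ℝ) ≤ Real.sqrt (2 * n + 2) := by
      apply Real.le_sqrt_of_sq_le
      have := (Nat.cast_le (α := ℝ)).mpr h2
      push_cast at this
      calc ((m - 1 : ℕ) : ℝ) ^ 2 = ((m - 1 : ℕ) : ℝ) * ((m - 1 : ℕ) : ℝ) := sq ((m - 1 : ℕ) : ℝ)
      _ ≤ 2 * n + 2 := by exact_mod_cast this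
    have h4 : Real.sqrt (2 * n + 2) ≤ Real.sqrt (2 * n) + 2 := by
      rw [Real.sqrt_le_left (by positivity)]
      have hs := Real.sq_sqrt (by positivity : (0:ℝ) ≤ 2 * (n:ℝ))
      have hnn := Real.sqrt_nonneg (2 * (n:ℝ))
      nlinarith
    have h5 : (m : ℝ) ≤ ((m - 1 : ℕ) : ℝ) + 1 := by
      have : m ≤ (m - 1) + 1 := by omega
      exact_mod_cast this
    linarith
  have hlb : ∀ n : ℕ, 15 ≤ n →
      Real.sqrt (2 * n) ≤ (maxPattern 4 ![0, 0, 1, 1] n : ℝ) + 4 := by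
    intro n hn
    have hP0 : (4*0+6)*(4*0+5) ≤ 2*n := by omega
    set a := Nat.findGreatest (fun a => (4*a+6)*(4*a+5) ≤ 2*n) n with ha
    have hPa : (4*a+6)*(4*a+5) ≤ 2*n := by
      have h := Nat.findGreatest_spec (P := fun a => (4*a+6)*(4*a+5) ≤ 2*n) (m := 0)
        (Nat.zero_le n) hP0
      rw [← ha] at h
      exact h
    have han : a + 1 ≤ n := by
      have h1 : 2*(a+1) ≤ (4*a+6)*(4*a+5) := by nlinarith
      have h2 : 2*(a+1) ≤ 2*n := le_trans h1 hPa
      omega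
    have hnot : ¬ ((4*(a+1)+6)*(4*(a+1)+5) ≤ 2*n) := by
      have h := Nat.findGreatest_is_greatest (P := fun a => (4*a+6)*(4*a+5) ≤ 2*n) (n := n)
        (k := a+1) (by rw [← ha]; omega) han
      exact h
    have hlt : 2*n < (4*a+10)*(4*a+9) := by
      rw [show 4*(a+1)+6 = 4*a+10 by ring, show 4*(a+1)+5 = 4*a+9 by ring] at hnot
      omega
    have hchoose : Nat.choose (4*a+6) 2 ≤ n := by
      rw [Nat.choose_two_right, show 4*a+6-1 = 4*a+5 by omega]
      set K := (4*a+6)*(4*a+5) with hK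
      omega
    have hg := lb0011 a n hchoose
    have hsq : (2 * (n:ℝ)) ≤ ((4*a+10 : ℕ) : ℝ) ^ 2 := by
      have h1 : 2*n ≤ (4*a+10)*(4*a+10) := by nlinarith
      have := (Nat.cast_le (α := ℝ)).mpr h1
      push_cast at this ⊢
      nlinarith [this]
    have hs : Real.sqrt (2 * n) ≤ ((4*a+10 : ℕ) : ℝ) :=
      (Real.sqrt_le_left (by positivity)).mpr hsq
    have hgr : ((4*a+10 : ℕ) : ℝ) ≤ (maxPattern 4 ![0, 0, 1, 1] n : ℝ) + 4 := by
      have : (4*a+10 : ℕ) ≤ maxPattern 4 ![0, 0, 1, 1] n + 4 := by omega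
      exact_mod_cast this
    linarith
  have hdiv : Filter.Tendsto (fun n : ℕ => (4:ℝ) / Real.sqrt (2 * n))
      Filter.atTop (nhds 0) := Filter.Tendsto.div_atTop tendsto_const_nhds sqrt_two_n_atTop
  have hdiv3 : Filter.Tendsto (fun n : ℕ => (3:ℝ) / Real.sqrt (2 * n))
      Filter.atTop (nhds 0) := Filter.Tendsto.div_atTop tendsto_const_nhds sqrt_two_n_atTop
  have hlow : Filter.Tendsto (fun n : ℕ => 1 - (4:ℝ) / Real.sqrt (2 * n))
      Filter.atTop (nhds 1) := by
    have := (tendsto_const_nhds (x := (1:ℝ)) (f := Filter.atTop (α := ℕ))).sub hdiv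
    simpa using this
  have hhigh : Filter.Tendsto (fun n : ℕ => 1 + (3:ℝ) / Real.sqrt (2 * n))
      Filter.atTop (nhds 1) := by
    have := (tendsto_const_nhds (x := (1:ℝ)) (f := Filter.atTop (α := ℕ))).add hdiv3
    simpa using this
  apply tendsto_of_tendsto_of_tendsto_of_le_of_le' hlow hhigh
  · filter_upwards [Filter.eventually_ge_atTop 15] with n hn
    have hpos : 0 < Real.sqrt (2 * n) := by
      apply Real.sqrt_pos.mpr
      have : (1:ℝ) ≤ (n:ℝ) := by exact_mod_cast (by omega : 1 ≤ n)
      linarith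
    have h1 := hlb n hn
    have h2 : (Real.sqrt (2 * n) - 4) / Real.sqrt (2 * n)
        ≤ (maxPattern 4 ![0, 0, 1, 1] n : ℝ) / Real.sqrt (2 * n) :=
      (div_le_div_iff_of_pos_right hpos).mpr (by linarith)
    rw [sub_div, div_self hpos.ne'] at h2
    exact h2
  · filter_upwards [Filter.eventually_ge_atTop 1] with n hn
    have hpos : 0 < Real.sqrt (2 * n) := by
      apply Real.sqrt_pos.mpr
      have : (1:ℝ) ≤ (n:ℝ) := by exact_mod_cast hn
      linarith
    have h2 : (maxPattern 4 ![0, 0, 1, 1] n : ℝ) / Real.sqrt (2 * n)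
        ≤ (Real.sqrt (2 * n) + 3) / Real.sqrt (2 * n) :=
      (div_le_div_iff_of_pos_right hpos).mpr (hub n)
    rw [add_div, div_self hpos.ne'] at h2
    exact h2


end IPHelper

theorem f_1010_and_0011 :
    (∀ n : ℕ, 2 ≤ n → Even n → maxPattern 4 ![1, 0, 1, 0] n = n) ∧
    (∀ n : ℕ, 3 ≤ n → Odd n → maxPattern 4 ![1, 0, 1, 0] n = n - 1) ∧
    Filter.Tendsto (fun n : ℕ => (maxPattern 4 ![0, 0, 1, 1] n : ℝ) / Real.sqrt (2 * n))
      Filter.atTop (nhds 1) :=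
  ⟨fun _ h2 he => IPHelper.part1 h2 he, fun _ h3 ho => IPHelper.part2 h3 ho, IPHelper.part3⟩
end
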